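/- arXiv:2101.10910 — 2 statements merged into one kernel-verified Lean document; each statement's English description precedes it below -/
import Mathlib

section
/- As formal power series (or for |q|<1): Σ_{m∈ℤ} (−1)^m q^{(5m²+5m)/2} / (1−q^{5m+2}) = (q^5;q^5)_∞² · H(q), where H(q) = 1/((q^2;q^5)_∞ (q^3;q^5)_∞). -/
/-- Infinite q-Pochhammer symbol `(a;b)_∞ = ∏_{m≥0} (1 - a b^m)`. -/
noncomputable def qPochInf (a b : ℂ) : ℂ := ∏' m : ℕ, (1 - a * b ^ m)

/-- Rogers–Ramanujan product `H(q) = 1/((q^2;q^5)_∞ (q^3;q^5)_∞)`. -/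
noncomputable def RRH (q : ℂ) : ℂ := 1 / (qPochInf (q ^ 2) (q ^ 5) * qPochInf (q ^ 3) (q ^ 5))



open Finset Filter Topology

namespace BilateralAux

/-! ### Convergence of q-Pochhammer products -/

lemma factor_ne_zero {a b : ℂ} (ha : ‖a‖ < 1) (hb : ‖b‖ < 1) (m : ℕ) :
    (1 : ℂ) - a * b ^ m ≠ 0 := by
  have h : ‖a * b ^ m‖ < 1 := by
    rw [norm_mul, norm_pow]
    calc ‖a‖ * ‖b‖ ^ m ≤ ‖a‖ * 1 := by
          apply mul_le_mul_of_nonneg_left _ (norm_nonneg a)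
          exact pow_le_one₀ (norm_nonneg b) hb.le
      _ < 1 := by simpa using ha
  intro h0
  have : a * b ^ m = 1 := by linear_combination -h0
  rw [this] at h
  simp at h

lemma summable_log {a b : ℂ} (ha : ‖a‖ < 1) (hb : ‖b‖ < 1) :
    Summable (fun m : ℕ => Complex.log (1 - a * b ^ m)) := by
  have key : ∀ m : ℕ, ‖Complex.log (1 - a * b ^ m)‖
      ≤ (‖a‖ * (1 - ‖a‖)⁻¹ / 2 + 1) * (‖a‖ * ‖b‖ ^ m) := by
    intro m
    have hnorm : ‖-(a * b ^ m)‖ ≤ ‖a‖ := by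
      rw [norm_neg, norm_mul, norm_pow]
      calc ‖a‖ * ‖b‖ ^ m ≤ ‖a‖ * 1 := by
            apply mul_le_mul_of_nonneg_left _ (norm_nonneg a)
            exact pow_le_one₀ (norm_nonneg b) hb.le
        _ = ‖a‖ := mul_one _
    have hlt : ‖-(a * b ^ m)‖ < 1 := lt_of_le_of_lt hnorm ha
    have h1 : (1 : ℂ) - a * b ^ m = 1 + -(a * b ^ m) := by ring
    rw [h1]
    refine le_trans (Complex.norm_log_one_add_le hlt) ?_
    have hnn : (0:ℝ) ≤ ‖-(a * b ^ m)‖ := norm_nonneg _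
    have e1 : ‖-(a * b ^ m)‖ = ‖a‖ * ‖b‖ ^ m := by
      rw [norm_neg, norm_mul, norm_pow]
    have hb1 : ‖a‖ * ‖b‖ ^ m ≤ ‖a‖ := by simpa [e1] using hnorm
    have hinv : (1 - ‖-(a * b ^ m)‖)⁻¹ ≤ (1 - ‖a‖)⁻¹ := by
      apply inv_anti₀
      · linarith
      · linarith [hnorm]
    rw [e1] at hlt ⊢
    rw [e1] at hinv
    have hbm : (0:ℝ) ≤ ‖a‖ * ‖b‖ ^ m := by positivity
    have hu : (0:ℝ) ≤ (1 - ‖a‖ * ‖b‖ ^ m)⁻¹ := by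
      apply inv_nonneg.2; linarith
    have hv : (0:ℝ) ≤ (1 - ‖a‖)⁻¹ := by
      apply inv_nonneg.2; linarith
    nlinarith [mul_le_mul hb1 hinv hu (norm_nonneg a), sq_nonneg (‖a‖ * ‖b‖ ^ m)]
  apply Summable.of_norm_bounded ?_ key
  apply Summable.mul_left
  apply Summable.mul_left
  exact summable_geometric_of_lt_one (norm_nonneg b) hb

lemma hasProd_poch {a b : ℂ} (ha : ‖a‖ < 1) (hb : ‖b‖ < 1) :
    HasProd (fun m : ℕ => 1 - a * b ^ m) (qPochInf a b) := by
  have := Complex.hasProd_of_hasSum_log (f := fun (m : ℕ) => 1 - a * b ^ m)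
    (fun m => factor_ne_zero ha hb m)
    (summable_log ha hb).hasSum
  simpa [qPochInf] using this.multipliable.hasProd

lemma poch_ne_zero {a b : ℂ} (ha : ‖a‖ < 1) (hb : ‖b‖ < 1) : qPochInf a b ≠ 0 := by
  have := Complex.cexp_tsum_eq_tprod (f := fun (m : ℕ) => 1 - a * b ^ m)
    (fun m => factor_ne_zero ha hb m) (summable_log ha hb)
  rw [qPochInf, ← this]
  exact Complex.exp_ne_zero _

lemma tendsto_poch {a b : ℂ} (ha : ‖a‖ < 1) (hb : ‖b‖ < 1) :
    Tendsto (fun N => ∏ m ∈ range N, (1 - a * b ^ m)) atTop (𝓝 (qPochInf a b)) :=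
  (hasProd_poch ha hb).tendsto_prod_nat



lemma norm_q_pos {q : ℂ} (hq0 : q ≠ 0) : 0 < ‖q‖ := norm_pos_iff.mpr hq0

lemma norm_pow_lt_one {q : ℂ} (hq : ‖q‖ < 1) {k : ℕ} (hk : k ≠ 0) : ‖q ^ k‖ < 1 := by
  rw [norm_pow]
  exact pow_lt_one₀ (norm_nonneg q) hq hk

lemma one_sub_zpow_ne {q : ℂ} (hq0 : q ≠ 0) (hq : ‖q‖ < 1) {k : ℤ} (hk : k ≠ 0) :
    (1 : ℂ) - q ^ k ≠ 0 := by
  intro h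
  have h1 : q ^ k = 1 := by linear_combination -h
  have h2 : ‖q‖ ^ k = 1 := by rw [← norm_zpow, h1, norm_one]
  have hsa := zpow_right_strictAnti₀ (norm_q_pos hq0) hq
  rcases lt_or_gt_of_ne hk with h3 | h3
  · have := hsa h3
    simp only [zpow_zero] at this
    rw [h2] at this
    exact lt_irrefl _ this
  · have := hsa h3
    simp only [zpow_zero] at this
    rw [h2] at this
    exact lt_irrefl _ this

noncomputable def P (q : ℂ) (k : ℕ) : ℂ := ∏ j ∈ range k, (1 - q ^ 5 * (q ^ 5) ^ j)
noncomputable def A (q : ℂ) (N : ℕ) : ℂ := ∏ i ∈ range (N + 1), (1 - q ^ 2 * (q ^ 5) ^ i)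
noncomputable def B (q : ℂ) (N : ℕ) : ℂ := ∏ i ∈ range N, (1 - q ^ 3 * (q ^ 5) ^ i)
noncomputable def trm (q : ℂ) (m : ℤ) : ℂ :=
    (-1 : ℂ) ^ m * q ^ ((5 * m ^ 2 + 5 * m) / 2) / (1 - q ^ (5 * m + 2))

section

variable {q : ℂ} (hq0 : q ≠ 0) (hq : ‖q‖ < 1)

include hq

lemma tendsto_P : Tendsto (P q) atTop (𝓝 (qPochInf (q ^ 5) (q ^ 5))) := by
  exact tendsto_poch (norm_pow_lt_one hq (by norm_num))
    (norm_pow_lt_one hq (by norm_num))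

lemma tendsto_A : Tendsto (A q) atTop (𝓝 (qPochInf (q ^ 2) (q ^ 5))) := by
  have h := tendsto_poch (a := q ^ 2) (b := q ^ 5)
    (norm_pow_lt_one hq (by norm_num)) (norm_pow_lt_one hq (by norm_num))
  exact h.comp (tendsto_add_atTop_nat 1)

lemma tendsto_B : Tendsto (B q) atTop (𝓝 (qPochInf (q ^ 3) (q ^ 5))) := by
  exact tendsto_poch (norm_pow_lt_one hq (by norm_num))
    (norm_pow_lt_one hq (by norm_num))

lemma P_ne_zero (k : ℕ) : P q k ≠ 0 := by
  apply prod_ne_zero_iff.mpr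
  intro j _
  exact factor_ne_zero (norm_pow_lt_one hq (by norm_num))
    (norm_pow_lt_one hq (by norm_num)) j

lemma A_ne_zero (N : ℕ) : A q N ≠ 0 := by
  apply prod_ne_zero_iff.mpr
  intro j _
  exact factor_ne_zero (norm_pow_lt_one hq (by norm_num))
    (norm_pow_lt_one hq (by norm_num)) j

lemma B_ne_zero (N : ℕ) : B q N ≠ 0 := by
  apply prod_ne_zero_iff.mpr
  intro j _
  exact factor_ne_zero (norm_pow_lt_one hq (by norm_num))
    (norm_pow_lt_one hq (by norm_num)) j

/-- uniform geometric partial sum bound -/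
lemma geom_partial_le (k : ℕ) :
    ∑ j ∈ range k, ‖q‖ ^ 5 * (‖q‖ ^ 5) ^ j ≤ ‖q‖ ^ 5 * (1 - ‖q‖ ^ 5)⁻¹ := by
  have hρ1 : ‖q‖ ^ 5 < 1 := by
    have := norm_pow_lt_one hq (k := 5) (by norm_num)
    rwa [norm_pow] at this
  have hρ0 : (0:ℝ) ≤ ‖q‖ ^ 5 := by positivity
  rw [← mul_sum]
  apply mul_le_mul_of_nonneg_left _ hρ0
  calc ∑ j ∈ range k, (‖q‖ ^ 5) ^ j ≤ ∑' j : ℕ, (‖q‖ ^ 5) ^ j := by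
        apply Summable.sum_le_tsum _ (fun j _ => by positivity)
        exact summable_geometric_of_lt_one hρ0 hρ1
    _ = (1 - ‖q‖ ^ 5)⁻¹ := tsum_geometric_of_lt_one hρ0 hρ1

lemma P_norm_upper (k : ℕ) :
    ‖P q k‖ ≤ Real.exp (‖q‖ ^ 5 * (1 - ‖q‖ ^ 5)⁻¹) := by
  rw [P, norm_prod]
  calc ∏ j ∈ range k, ‖1 - q ^ 5 * (q ^ 5) ^ j‖
      ≤ ∏ j ∈ range k, Real.exp (‖q‖ ^ 5 * (‖q‖ ^ 5) ^ j) := by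
        apply prod_le_prod (fun j _ => norm_nonneg _)
        intro j _
        calc ‖1 - q ^ 5 * (q ^ 5) ^ j‖ ≤ ‖(1:ℂ)‖ + ‖q ^ 5 * (q ^ 5) ^ j‖ := norm_sub_le _ _
          _ = 1 + ‖q‖ ^ 5 * (‖q‖ ^ 5) ^ j := by
              rw [norm_one, norm_mul, norm_pow, norm_pow, norm_pow]
          _ ≤ Real.exp (‖q‖ ^ 5 * (‖q‖ ^ 5) ^ j) := by
              have := Real.add_one_le_exp (‖q‖ ^ 5 * (‖q‖ ^ 5) ^ j)
              linarith
    _ = Real.exp (∑ j ∈ range k, ‖q‖ ^ 5 * (‖q‖ ^ 5) ^ j) := by rw [← Real.exp_sum]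
    _ ≤ Real.exp (‖q‖ ^ 5 * (1 - ‖q‖ ^ 5)⁻¹) := by
        exact Real.exp_le_exp.mpr (geom_partial_le hq k)

lemma P_norm_lower (k : ℕ) :
    Real.exp (-((1 - ‖q‖ ^ 5)⁻¹ * (‖q‖ ^ 5 * (1 - ‖q‖ ^ 5)⁻¹))) ≤ ‖P q k‖ := by
  have hρ1 : ‖q‖ ^ 5 < 1 := by
    have := norm_pow_lt_one hq (k := 5) (by norm_num)
    rwa [norm_pow] at this
  have hρ0 : (0:ℝ) ≤ ‖q‖ ^ 5 := by positivity
  set c : ℝ := (1 - ‖q‖ ^ 5)⁻¹ with hc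
  have hcpos : 0 < c := by rw [hc]; apply inv_pos.2; linarith
  rw [P, norm_prod]
  calc Real.exp (-(c * (‖q‖ ^ 5 * (1 - ‖q‖ ^ 5)⁻¹)))
      ≤ Real.exp (-(c * ∑ j ∈ range k, ‖q‖ ^ 5 * (‖q‖ ^ 5) ^ j)) := by
        apply Real.exp_le_exp.mpr
        apply neg_le_neg
        exact mul_le_mul_of_nonneg_left (geom_partial_le hq k) hcpos.le
    _ = ∏ j ∈ range k, Real.exp (-(c * (‖q‖ ^ 5 * (‖q‖ ^ 5) ^ j))) := by
        rw [← Real.exp_sum]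
        congr 1
        rw [mul_sum, Finset.sum_neg_distrib]
    _ ≤ ∏ j ∈ range k, ‖1 - q ^ 5 * (q ^ 5) ^ j‖ := by
        apply prod_le_prod (fun j _ => (Real.exp_pos _).le)
        intro j _
        set x : ℝ := ‖q‖ ^ 5 * (‖q‖ ^ 5) ^ j with hx
        have hx0 : 0 ≤ x := by positivity
        have hxρ : x ≤ ‖q‖ ^ 5 := by
          rw [hx]
          calc ‖q‖ ^ 5 * (‖q‖ ^ 5) ^ j ≤ ‖q‖ ^ 5 * 1 :=
                mul_le_mul_of_nonneg_left (pow_le_one₀ hρ0 hρ1.le) hρ0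
            _ = ‖q‖ ^ 5 := mul_one _
        have hx1 : x < 1 := lt_of_le_of_lt hxρ hρ1
        have key : Real.exp (-(c * x)) ≤ 1 - x := by
          have h5 : 1 ≤ c * (1 - x) := by
            have h4 : c * (1 - ‖q‖ ^ 5) = 1 := by
              rw [hc]; exact inv_mul_cancel₀ (by linarith)
            nlinarith [mul_le_mul_of_nonneg_left (sub_le_sub_left hxρ (1:ℝ)) hcpos.le]
          have h1 : (1 - x)⁻¹ ≤ Real.exp (c * x) := by
            have h2 : 1 + c * x ≤ Real.exp (c * x) := by
              have := Real.add_one_le_exp (c * x)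
              linarith
            refine le_trans ?_ h2
            rw [inv_le_iff_one_le_mul₀ (by linarith)]
            nlinarith [mul_le_mul_of_nonneg_left h5 hx0]
          have h6 := inv_anti₀ (inv_pos.2 (by linarith) : (0:ℝ) < (1 - x)⁻¹) h1
          rw [inv_inv] at h6
          rw [Real.exp_neg]
          exact h6
        calc Real.exp (-(c * x)) ≤ 1 - x := key
          _ ≤ ‖1 - q ^ 5 * (q ^ 5) ^ j‖ := by
              have h3 : ‖q ^ 5 * (q ^ 5) ^ j‖ = x := by
                rw [hx, norm_mul, norm_pow, norm_pow, norm_pow]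
              calc (1:ℝ) - x = ‖(1:ℂ)‖ - ‖q ^ 5 * (q ^ 5) ^ j‖ := by rw [norm_one, h3]
                _ ≤ ‖1 - q ^ 5 * (q ^ 5) ^ j‖ := norm_sub_norm_le _ _

end

end BilateralAux
section Part3
open Finset Filter Topology
namespace BilateralAux

lemma zpow_prod {q : ℂ} (hq0 : q ≠ 0) {ι : Type*} (s : Finset ι) (f : ι → ℤ) :
    ∏ i ∈ s, q ^ f i = q ^ (∑ i ∈ s, f i) := by
  classical
  induction s using Finset.cons_induction with
  | empty => simp
  | cons a s ha ih => rw [prod_cons, sum_cons, zpow_add₀ hq0, ih]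

lemma gauss5 (k : ℕ) : 2 * (∑ t ∈ range k, (5 * (t : ℤ) + 5)) = 5 * k ^ 2 + 5 * k := by
  induction k with
  | zero => simp
  | succ n ih =>
    rw [Finset.sum_range_succ]
    push_cast
    push_cast at ih
    linarith

lemma gauss3 (k : ℕ) : 2 * (∑ t ∈ range k, (5 * (t : ℤ) + 3)) = 5 * k ^ 2 + k := by
  induction k with
  | zero => simp
  | succ n ih =>
    rw [Finset.sum_range_succ]
    push_cast
    push_cast at ih
    linarith

lemma two_dvd_five_sq (m : ℤ) : 2 * ((5 * m ^ 2 + 5 * m) / 2) = 5 * m ^ 2 + 5 * m := by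
  have h : (2:ℤ) ∣ 5 * m ^ 2 + 5 * m := by
    have := Int.even_mul_succ_self m
    obtain ⟨k, hk⟩ := this
    exact ⟨5 * k, by linear_combination 5 * hk⟩
  exact Int.mul_ediv_cancel' h

lemma neg_one_zpow_ne : ∀ k : ℤ, ((-1 : ℂ)) ^ k ≠ 0 := fun k => zpow_ne_zero k (by norm_num)

lemma flip_factor {q : ℂ} (hq0 : q ≠ 0) (a : ℤ) :
    1 - q ^ (-a) = -(q ^ (-a)) * (1 - q ^ a) := by
  have h : q ^ (-a) * q ^ a = 1 := by
    rw [← zpow_add₀ hq0]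
    simp
  linear_combination -h

lemma zpow_to_P_factor {q : ℂ} (t : ℕ) :
    q ^ (5 * (t : ℤ) + 5) = q ^ 5 * (q ^ 5) ^ t := by
  rw [show (5 * (t : ℤ) + 5) = ((5 * t + 5 : ℕ) : ℤ) by push_cast; ring, zpow_natCast]
  rw [pow_add, pow_mul, mul_comm]

lemma zpow_to_B_factor {q : ℂ} (t : ℕ) :
    q ^ (5 * (t : ℤ) + 3) = q ^ 3 * (q ^ 5) ^ t := by
  rw [show (5 * (t : ℤ) + 3) = ((5 * t + 3 : ℕ) : ℤ) by push_cast; ring, zpow_natCast]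
  rw [pow_add, pow_mul, mul_comm]

lemma zpow_to_A_factor {q : ℂ} (t : ℕ) :
    q ^ (5 * (t : ℤ) + 2) = q ^ 2 * (q ^ 5) ^ t := by
  rw [show (5 * (t : ℤ) + 2) = ((5 * t + 2 : ℕ) : ℤ) by push_cast; ring, zpow_natCast]
  rw [pow_add, pow_mul, mul_comm]

/-- Product over `range k` of `(1 - q^{-(5t+5)})`. -/
lemma neg_exp_prod5 {q : ℂ} (hq0 : q ≠ 0) (k : ℕ) :
    ∏ t ∈ range k, (1 - q ^ (-(5 * (t : ℤ) + 5))) =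
      (-1 : ℂ) ^ k * (q ^ (∑ t ∈ range k, (5 * (t : ℤ) + 5)))⁻¹ * P q k := by
  have h1 : ∀ t ∈ range k, (1 - q ^ (-(5 * (t : ℤ) + 5)))
      = (-1) * q ^ (-(5 * (t : ℤ) + 5)) * (1 - q ^ (5 * (t : ℤ) + 5)) := by
    intro t _
    rw [flip_factor hq0 (5 * (t : ℤ) + 5)]
    ring
  rw [prod_congr rfl h1]
  rw [prod_mul_distrib, prod_mul_distrib, prod_const]
  rw [zpow_prod hq0, card_range]
  rw [show (∑ t ∈ range k, -(5 * (t : ℤ) + 5)) = -(∑ t ∈ range k, (5 * (t : ℤ) + 5)) by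
    rw [Finset.sum_neg_distrib], zpow_neg]
  congr 1
  rw [P]
  exact prod_congr rfl fun t _ => by rw [zpow_to_P_factor]

lemma neg_exp_prod3 {q : ℂ} (hq0 : q ≠ 0) (k : ℕ) :
    ∏ t ∈ range k, (1 - q ^ (-(5 * (t : ℤ) + 3))) =
      (-1 : ℂ) ^ k * (q ^ (∑ t ∈ range k, (5 * (t : ℤ) + 3)))⁻¹ * B q k := by
  have h1 : ∀ t ∈ range k, (1 - q ^ (-(5 * (t : ℤ) + 3)))
      = (-1) * q ^ (-(5 * (t : ℤ) + 3)) * (1 - q ^ (5 * (t : ℤ) + 3)) := by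
    intro t _
    rw [flip_factor hq0 (5 * (t : ℤ) + 3)]
    ring
  rw [prod_congr rfl h1]
  rw [prod_mul_distrib, prod_mul_distrib, prod_const]
  rw [zpow_prod hq0, card_range]
  rw [show (∑ t ∈ range k, -(5 * (t : ℤ) + 3)) = -(∑ t ∈ range k, (5 * (t : ℤ) + 3)) by
    rw [Finset.sum_neg_distrib], zpow_neg]
  congr 1
  rw [B]
  exact prod_congr rfl fun t _ => by rw [zpow_to_B_factor]

end BilateralAux
end Part3
section Part4
open Finset Filter Topology
namespace BilateralAux

/-- Splitting of the punctured index range. -/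
lemma erase_split (N i : ℕ) (hi : i < 2 * N + 1) :
    (range (2 * N + 1)).erase i = range i ∪ Ico (i + 1) (2 * N + 1) := by
  ext j
  simp only [mem_erase, mem_range, mem_union, mem_Ico]
  omega

lemma stepD {q : ℂ} (hq0 : q ≠ 0) (N i : ℕ) (hi : i < 2 * N + 1) :
    ∏ j ∈ (range (2 * N + 1)).erase i, (1 - q ^ (5 * ((j : ℤ) - (i : ℤ)))) =
      (-1 : ℂ) ^ i * (q ^ (∑ t ∈ range i, (5 * (t : ℤ) + 5)))⁻¹ * (P q i * P q (2 * N - i)) := by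
  rw [erase_split N i hi, prod_union (by
    simp only [disjoint_left, mem_range, mem_Ico]
    omega)]
  have hpart1 : ∏ j ∈ range i, (1 - q ^ (5 * ((j : ℤ) - (i : ℤ)))) =
      (-1 : ℂ) ^ i * (q ^ (∑ t ∈ range i, (5 * (t : ℤ) + 5)))⁻¹ * P q i := by
    rw [← prod_range_reflect (fun j => 1 - q ^ (5 * ((j : ℤ) - (i : ℤ)))) i]
    rw [← neg_exp_prod5 hq0 i]
    apply prod_congr rfl
    intro t ht
    rw [mem_range] at ht
    congr 1
    congr 1
    have : ((i - 1 - t : ℕ) : ℤ) = (i : ℤ) - 1 - t := by omega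
    rw [this]
    ring
  have hpart2 : ∏ j ∈ Ico (i + 1) (2 * N + 1), (1 - q ^ (5 * ((j : ℤ) - (i : ℤ)))) =
      P q (2 * N - i) := by
    rw [prod_Ico_eq_prod_range]
    have hcard : 2 * N + 1 - (i + 1) = 2 * N - i := by omega
    rw [hcard, P]
    apply prod_congr rfl
    intro t _
    rw [show (5 * ((↑(i + 1 + t) : ℤ) - (i:ℤ))) = 5 * (t : ℤ) + 5 by push_cast; ring,
      zpow_to_P_factor]
  rw [hpart1, hpart2, mul_assoc]

lemma stepE {q : ℂ} (hq0 : q ≠ 0) (N : ℕ) :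
    ∏ j ∈ range (2 * N + 1), (1 - q ^ (5 * ((j : ℤ) - (N : ℤ)) + 2)) =
      A q N * ((-1 : ℂ) ^ N * (q ^ (∑ t ∈ range N, (5 * (t : ℤ) + 3)))⁻¹ * B q N) := by
  have hsplit : range (2 * N + 1) = range N ∪ Ico N (2 * N + 1) := by
    ext j
    simp only [mem_range, mem_union, mem_Ico]
    omega
  rw [hsplit, prod_union (by
    simp only [disjoint_left, mem_range, mem_Ico]
    omega)]
  have hpart1 : ∏ j ∈ range N, (1 - q ^ (5 * ((j : ℤ) - (N : ℤ)) + 2)) =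
      (-1 : ℂ) ^ N * (q ^ (∑ t ∈ range N, (5 * (t : ℤ) + 3)))⁻¹ * B q N := by
    rw [← prod_range_reflect (fun j => 1 - q ^ (5 * ((j : ℤ) - (N : ℤ)) + 2)) N]
    rw [← neg_exp_prod3 hq0 N]
    apply prod_congr rfl
    intro t ht
    rw [mem_range] at ht
    congr 1
    congr 1
    have : ((N - 1 - t : ℕ) : ℤ) = (N : ℤ) - 1 - t := by omega
    rw [this]
    ring
  have hpart2 : ∏ j ∈ Ico N (2 * N + 1), (1 - q ^ (5 * ((j : ℤ) - (N : ℤ)) + 2)) =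
      A q N := by
    rw [prod_Ico_eq_prod_range]
    have hcard : 2 * N + 1 - N = N + 1 := by omega
    rw [hcard, A]
    apply prod_congr rfl
    intro t _
    rw [show (5 * ((↑(N + t) : ℤ) - (N:ℤ)) + 2) = 5 * (t : ℤ) + 2 by push_cast; ring,
      zpow_to_A_factor]
  rw [hpart1, hpart2, mul_comm]

end BilateralAux
end Part4
section Part5
open Finset Filter Topology Polynomial
namespace BilateralAux

lemma v_injOn {q : ℂ} (hq0 : q ≠ 0) (hq : ‖q‖ < 1) (N : ℕ) :
    Set.InjOn (fun i : ℕ => q ^ (5 * ((N : ℤ) - (i : ℤ)))) ↑(range (2 * N + 1)) := by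
  intro a _ b _ hab
  simp only at hab
  have h2 : ‖q‖ ^ (5 * ((N : ℤ) - (a : ℤ))) = ‖q‖ ^ (5 * ((N : ℤ) - (b : ℤ))) := by
    rw [← norm_zpow, ← norm_zpow, hab]
  have hinj := (zpow_right_strictAnti₀ (norm_q_pos hq0) hq).injective h2
  omega

lemma stepA {q : ℂ} (hq0 : q ≠ 0) (hq : ‖q‖ < 1) (N : ℕ) :
    (q ^ 2) ^ N = ∑ i ∈ range (2 * N + 1),
      (q ^ (5 * ((N : ℤ) - (i : ℤ)))) ^ N *
        ∏ j ∈ (range (2 * N + 1)).erase i,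
          ((q ^ (5 * ((N : ℤ) - (i : ℤ))) - q ^ (5 * ((N : ℤ) - (j : ℤ))))⁻¹ *
            (q ^ 2 - q ^ (5 * ((N : ℤ) - (j : ℤ))))) := by
  classical
  set v : ℕ → ℂ := fun i => q ^ (5 * ((N : ℤ) - (i : ℤ))) with hv
  have hvs : Set.InjOn v ↑(range (2 * N + 1)) := v_injOn hq0 hq N
  have hdeg : (X ^ N : ℂ[X]).degree < (#(range (2 * N + 1)) : ℕ) := by
    rw [degree_X_pow, card_range]
    exact_mod_cast Nat.lt_succ_of_le (by omega)
  have h := Lagrange.eq_interpolate hvs hdeg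
  have h2 := congrArg (Polynomial.eval (q ^ 2)) h
  rw [eval_pow, eval_X] at h2
  rw [Lagrange.interpolate_apply] at h2
  rw [Polynomial.eval_finset_sum] at h2
  refine h2.trans (Finset.sum_congr rfl fun i _ => ?_)
  rw [eval_mul, eval_C, eval_pow, eval_X]
  congr 1
  rw [Lagrange.basis, eval_prod]
  refine Finset.prod_congr rfl fun j _ => ?_
  rw [Lagrange.basisDivisor, eval_mul, eval_C, eval_sub, eval_X, eval_C]

lemma stepB {q : ℂ} (hq0 : q ≠ 0) (hq : ‖q‖ < 1) (N i j : ℕ) (hij : j ≠ i) :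
    (q ^ (5 * ((N : ℤ) - (i : ℤ))) - q ^ (5 * ((N : ℤ) - (j : ℤ))))⁻¹ *
      (q ^ 2 - q ^ (5 * ((N : ℤ) - (j : ℤ)))) =
    (1 - q ^ (5 * ((j : ℤ) - (i : ℤ))))⁻¹ * (1 - q ^ (5 * ((j : ℤ) - (N : ℤ)) + 2)) := by
  have hu : q ^ (5 * ((N : ℤ) - (j : ℤ))) ≠ 0 := zpow_ne_zero _ hq0
  have e1 : q ^ (5 * ((N : ℤ) - (j : ℤ))) * q ^ (5 * ((j : ℤ) - (i : ℤ)))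
      = q ^ (5 * ((N : ℤ) - (i : ℤ))) := by
    rw [← zpow_add₀ hq0]
    congr 1
    ring
  have e2 : q ^ (5 * ((N : ℤ) - (j : ℤ))) * q ^ (5 * ((j : ℤ) - (N : ℤ)) + 2) = q ^ 2 := by
    rw [← zpow_add₀ hq0, show 5 * ((N:ℤ) - (j:ℤ)) + (5 * ((j:ℤ) - (N:ℤ)) + 2) = ((2:ℕ):ℤ) by
      push_cast; ring, zpow_natCast]
  have hw : (1 : ℂ) - q ^ (5 * ((j : ℤ) - (i : ℤ))) ≠ 0 :=
    one_sub_zpow_ne hq0 hq (by omega)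
  have h1 : q ^ (5 * ((N : ℤ) - (i : ℤ))) - q ^ (5 * ((N : ℤ) - (j : ℤ)))
      = q ^ (5 * ((N : ℤ) - (j : ℤ))) * (-(1 - q ^ (5 * ((j : ℤ) - (i : ℤ))))) := by
    linear_combination -e1
  have h2 : q ^ 2 - q ^ (5 * ((N : ℤ) - (j : ℤ)))
      = q ^ (5 * ((N : ℤ) - (j : ℤ))) * (-(1 - q ^ (5 * ((j : ℤ) - (N : ℤ)) + 2))) := by
    linear_combination -e2
  rw [h1, h2, mul_inv, inv_neg, mul_comm ((q ^ (5 * ((N:ℤ) - (j:ℤ))))⁻¹) _]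
  field_simp

end BilateralAux
end Part5
section Part6
open Finset Filter Topology
namespace BilateralAux

lemma neg_one_pow_inv (i : ℕ) : (((-1 : ℂ) ^ i)⁻¹) = (-1 : ℂ) ^ i := by
  have h : ((-1 : ℂ) ^ i) * ((-1 : ℂ) ^ i) = 1 := by
    rw [← pow_add, ← two_mul, pow_mul]
    norm_num
  exact inv_eq_of_mul_eq_one_right h

lemma sign_exp_H {q : ℂ} (hq0 : q ≠ 0) (N i : ℕ) :
    (-1 : ℂ) ^ i * (q ^ (5 * ((N : ℤ) - (i : ℤ)) * N) * q ^ (∑ t ∈ range i, (5 * (t : ℤ) + 5)))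
      = (-1 : ℂ) ^ N * ((-1 : ℂ) ^ ((i : ℤ) - (N : ℤ)) *
        (q ^ (∑ t ∈ range N, (5 * (t : ℤ) + 5)) *
          q ^ ((5 * ((i : ℤ) - (N : ℤ)) ^ 2 + 5 * ((i : ℤ) - (N : ℤ))) / 2))) := by
  have hsign : (-1 : ℂ) ^ N * (-1 : ℂ) ^ ((i : ℤ) - (N : ℤ)) = (-1 : ℂ) ^ i := by
    rw [show ((-1 : ℂ) ^ N) = (-1 : ℂ) ^ ((N : ℤ)) by rw [zpow_natCast],
      ← zpow_add₀ (by norm_num : (-1 : ℂ) ≠ 0),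
      show (N : ℤ) + ((i : ℤ) - (N : ℤ)) = ((i : ℕ) : ℤ) by ring, zpow_natCast]
  have hexp : 5 * ((N : ℤ) - (i : ℤ)) * N + (∑ t ∈ range i, (5 * (t : ℤ) + 5))
      = (∑ t ∈ range N, (5 * (t : ℤ) + 5))
        + (5 * ((i : ℤ) - (N : ℤ)) ^ 2 + 5 * ((i : ℤ) - (N : ℤ))) / 2 := by
    have g1 := gauss5 i
    have g2 := gauss5 N
    have g3 := two_dvd_five_sq ((i : ℤ) - (N : ℤ))
    nlinarith [g1, g2, g3]
  calc (-1 : ℂ) ^ i * (q ^ (5 * ((N : ℤ) - (i : ℤ)) * N) * q ^ (∑ t ∈ range i, (5 * (t : ℤ) + 5)))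
      = (-1 : ℂ) ^ i * q ^ (5 * ((N : ℤ) - (i : ℤ)) * N + (∑ t ∈ range i, (5 * (t : ℤ) + 5))) := by
        rw [zpow_add₀ hq0]
    _ = (-1 : ℂ) ^ i * q ^ ((∑ t ∈ range N, (5 * (t : ℤ) + 5))
        + (5 * ((i : ℤ) - (N : ℤ)) ^ 2 + 5 * ((i : ℤ) - (N : ℤ))) / 2) := by rw [hexp]
    _ = (-1 : ℂ) ^ N * ((-1 : ℂ) ^ ((i : ℤ) - (N : ℤ)) *
        (q ^ (∑ t ∈ range N, (5 * (t : ℤ) + 5)) *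
          q ^ ((5 * ((i : ℤ) - (N : ℤ)) ^ 2 + 5 * ((i : ℤ) - (N : ℤ))) / 2))) := by
        rw [zpow_add₀ hq0, ← hsign]
        ring

lemma per_i {q : ℂ} (hq0 : q ≠ 0) (hq : ‖q‖ < 1) (N i : ℕ) (hi : i ∈ range (2 * N + 1)) :
    (q ^ (5 * ((N : ℤ) - (i : ℤ)))) ^ N *
      ∏ j ∈ (range (2 * N + 1)).erase i,
        ((q ^ (5 * ((N : ℤ) - (i : ℤ))) - q ^ (5 * ((N : ℤ) - (j : ℤ))))⁻¹ *
          (q ^ 2 - q ^ (5 * ((N : ℤ) - (j : ℤ))))) =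
    (((∏ j ∈ range (2 * N + 1), (1 - q ^ (5 * ((j : ℤ) - (N : ℤ)) + 2))) * (-1 : ℂ) ^ N *
        q ^ (∑ t ∈ range N, (5 * (t : ℤ) + 5))) / P q N ^ 2) *
      (trm q ((i : ℤ) - (N : ℤ)) * (P q N ^ 2 / (P q i * P q (2 * N - i)))) := by
  have hi' : i < 2 * N + 1 := mem_range.mp hi
  -- rewrite the product over the punctured range
  have hB : ∀ j ∈ (range (2 * N + 1)).erase i,
      (q ^ (5 * ((N : ℤ) - (i : ℤ))) - q ^ (5 * ((N : ℤ) - (j : ℤ))))⁻¹ *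
        (q ^ 2 - q ^ (5 * ((N : ℤ) - (j : ℤ)))) =
      (1 - q ^ (5 * ((j : ℤ) - (i : ℤ))))⁻¹ * (1 - q ^ (5 * ((j : ℤ) - (N : ℤ)) + 2)) := by
    intro j hj
    exact stepB hq0 hq N i j (mem_erase.mp hj).1
  rw [prod_congr rfl hB, prod_mul_distrib, prod_inv_distrib, stepD hq0 N i hi']
  -- identify the erased product with D / X
  have hDX := Finset.mul_prod_erase (range (2 * N + 1))
    (fun j => 1 - q ^ (5 * ((j : ℤ) - (N : ℤ)) + 2)) hi
  set D := ∏ j ∈ range (2 * N + 1), (1 - q ^ (5 * ((j : ℤ) - (N : ℤ)) + 2)) with hD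
  set X := 1 - q ^ (5 * ((i : ℤ) - (N : ℤ)) + 2) with hX
  set Er := ∏ j ∈ (range (2 * N + 1)).erase i, (1 - q ^ (5 * ((j : ℤ) - (N : ℤ)) + 2)) with hEr
  have hXne : X ≠ 0 := one_sub_zpow_ne hq0 hq (by omega)
  have hPine : P q i ≠ 0 := P_ne_zero hq i
  have hPjne : P q (2 * N - i) ≠ 0 := P_ne_zero hq (2 * N - i)
  have hPNne : P q N ≠ 0 := P_ne_zero hq N
  have hq5 : q ^ (∑ t ∈ range i, (5 * (t : ℤ) + 5)) ≠ 0 := zpow_ne_zero _ hq0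
  have hq5N : q ^ (∑ t ∈ range N, (5 * (t : ℤ) + 5)) ≠ 0 := zpow_ne_zero _ hq0
  have hsne : ((-1 : ℂ) ^ i) ≠ 0 := pow_ne_zero _ (by norm_num)
  -- replace D with X * Er
  have hDXE : D = X * Er := by rw [← hDX]
  rw [trm, hDXE]
  -- convert the ℕ-power of a zpow to a zpow
  rw [show (q ^ (5 * ((N : ℤ) - (i : ℤ)))) ^ N = q ^ (5 * ((N : ℤ) - (i : ℤ)) * N) by
    rw [← zpow_natCast (q ^ (5 * ((N : ℤ) - (i : ℤ)))) N, ← zpow_mul]]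
  have H := sign_exp_H hq0 N i
  have hsq : ((-1 : ℂ) ^ i) * ((-1 : ℂ) ^ i) = 1 := by
    rw [← pow_add, ← two_mul, pow_mul]
    norm_num
  field_simp
  rw [← hX, eq_div_iff hXne]
  linear_combination ((-1 : ℂ) ^ i * Er * X) * H -
    ((q ^ (5 * ((N:ℤ) - (i:ℤ)) * (N:ℤ)) * q ^ (∑ t ∈ range i, (5 * (t:ℤ) + 5))) * Er * X) * hsq
end BilateralAux
end Part6
section Part7
open Finset Filter Topology
namespace BilateralAux

theorem finite_id {q : ℂ} (hq0 : q ≠ 0) (hq : ‖q‖ < 1) (N : ℕ) :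
    ∑ i ∈ range (2 * N + 1), trm q ((i : ℤ) - (N : ℤ)) * (P q N ^ 2 / (P q i * P q (2 * N - i)))
      = P q N ^ 2 / (A q N * B q N) := by
  set κ := ((∏ j ∈ range (2 * N + 1), (1 - q ^ (5 * ((j : ℤ) - (N : ℤ)) + 2))) * (-1 : ℂ) ^ N *
      q ^ (∑ t ∈ range N, (5 * (t : ℤ) + 5))) / P q N ^ 2 with hκ
  have hD_ne : (∏ j ∈ range (2 * N + 1), (1 - q ^ (5 * ((j : ℤ) - (N : ℤ)) + 2))) ≠ 0 :=
    prod_ne_zero_iff.mpr (fun j _ => one_sub_zpow_ne hq0 hq (by omega))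
  have hκ_ne : κ ≠ 0 := by
    rw [hκ]
    exact div_ne_zero (mul_ne_zero (mul_ne_zero hD_ne (pow_ne_zero _ (by norm_num)))
      (zpow_ne_zero _ hq0)) (pow_ne_zero _ (P_ne_zero hq N))
  have h1 : (q ^ 2) ^ N = κ *
      ∑ i ∈ range (2 * N + 1), trm q ((i : ℤ) - (N : ℤ)) *
        (P q N ^ 2 / (P q i * P q (2 * N - i))) := by
    rw [Finset.mul_sum, stepA hq0 hq N]
    exact Finset.sum_congr rfl fun i hi => per_i hq0 hq N i hi
  have h2 : (q ^ 2) ^ N = κ * (P q N ^ 2 / (A q N * B q N)) := by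
    rw [hκ, stepE hq0 N]
    have hS : (∑ t ∈ range N, (5 * (t : ℤ) + 5)) = (∑ t ∈ range N, (5 * (t : ℤ) + 3)) + 2 * N := by
      have h3 : ∀ t ∈ range N, (5 * (t : ℤ) + 5) = (5 * (t : ℤ) + 3) + 2 := fun t _ => by ring
      rw [Finset.sum_congr rfl h3, Finset.sum_add_distrib, Finset.sum_const, card_range]
      push_cast
      ring
    have hq2 : q ^ (∑ t ∈ range N, (5 * (t : ℤ) + 5)) =
        q ^ (∑ t ∈ range N, (5 * (t : ℤ) + 3)) * (q ^ 2) ^ N := by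
      rw [hS, zpow_add₀ hq0]
      congr 1
      rw [show (2 * (N : ℤ)) = ((2 * N : ℕ) : ℤ) by push_cast; ring, zpow_natCast, pow_mul]
    rw [hq2]
    have hsq : ((-1 : ℂ) ^ N) * ((-1 : ℂ) ^ N) = 1 := by
      rw [← pow_add, ← two_mul, pow_mul]
      norm_num
    have hAne : A q N ≠ 0 := A_ne_zero hq N
    have hBne : B q N ≠ 0 := B_ne_zero hq N
    have hPNne : P q N ≠ 0 := P_ne_zero hq N
    have hq3 : q ^ (∑ t ∈ range N, (5 * (t : ℤ) + 3)) ≠ 0 := zpow_ne_zero _ hq0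
    have hsq' : ((-1 : ℂ)) ^ (N * 2) = 1 := by
      rw [mul_comm, pow_mul]
      norm_num
    field_simp
    linear_combination (-1 : ℂ) * hsq' 
  exact mul_left_cancel₀ hκ_ne (h1.symm.trans h2)

end BilateralAux
end Part7
section Part8
open Finset Filter Topology
namespace BilateralAux

noncomputable def Cq (q : ℂ) : ℝ := (1 - ‖q‖ ^ 2)⁻¹ + ‖q‖⁻¹ * (‖q‖ ^ (-3 : ℤ) - 1)⁻¹

lemma r_facts {q : ℂ} (hq0 : q ≠ 0) (hq : ‖q‖ < 1) :
    0 < ‖q‖ ∧ ‖q‖ ^ 2 < 1 ∧ 1 < ‖q‖ ^ (-3 : ℤ) := by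
  refine ⟨norm_q_pos hq0, ?_, ?_⟩
  · exact pow_lt_one₀ (norm_nonneg q) hq (by norm_num)
  · have := zpow_right_strictAnti₀ (norm_q_pos hq0) hq (show (-3 : ℤ) < 0 by norm_num)
    simpa using this

lemma norm_trm_le {q : ℂ} (hq0 : q ≠ 0) (hq : ‖q‖ < 1) (n : ℤ) :
    ‖trm q n‖ ≤ Cq q * ‖q‖ ^ n.natAbs := by
  obtain ⟨hr0, hr2, hr3⟩ := r_facts hq0 hq
  have hanti := (zpow_right_strictAnti₀ hr0 hq).antitone
  have hCplus : 0 ≤ (1 - ‖q‖ ^ 2)⁻¹ := inv_nonneg.2 (by linarith)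
  have hCplus2 : 0 ≤ ‖q‖⁻¹ * (‖q‖ ^ (-3 : ℤ) - 1)⁻¹ := by
    apply mul_nonneg (inv_nonneg.2 hr0.le) (inv_nonneg.2 (by linarith))
  have hnorm : ‖trm q n‖ = ‖q‖ ^ ((5 * n ^ 2 + 5 * n) / 2) / ‖1 - q ^ (5 * n + 2)‖ := by
    rw [trm, norm_div, norm_mul, norm_zpow, norm_zpow, norm_neg, norm_one, one_zpow, one_mul]
  rw [hnorm]
  have hu := two_dvd_five_sq n
  rcases le_or_gt 0 n with hn | hn
  · -- n ≥ 0
    have hd1 : ‖q‖ ^ ((5 : ℤ) * n + 2) ≤ ‖q‖ ^ (2 : ℤ) := hanti (by omega)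
    have hd : 1 - ‖q‖ ^ 2 ≤ ‖1 - q ^ (5 * n + 2)‖ := by
      calc 1 - ‖q‖ ^ 2 = ‖(1 : ℂ)‖ - ‖q‖ ^ ((2 : ℕ) : ℤ) := by rw [norm_one, zpow_natCast]
        _ ≤ ‖(1 : ℂ)‖ - ‖q ^ (5 * n + 2)‖ := by
            rw [norm_zpow]
            have : ((2 : ℕ) : ℤ) = (2 : ℤ) := by norm_num
            rw [this]
            linarith [hd1]
        _ ≤ ‖1 - q ^ (5 * n + 2)‖ := norm_sub_norm_le _ _
    have hnum : ‖q‖ ^ ((5 * n ^ 2 + 5 * n) / 2) ≤ ‖q‖ ^ (n.natAbs : ℤ) := by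
      apply hanti
      have h1 : (n.natAbs : ℤ) = n := Int.natAbs_of_nonneg hn
      rw [h1]
      nlinarith [hu]
    calc ‖q‖ ^ ((5 * n ^ 2 + 5 * n) / 2) / ‖1 - q ^ (5 * n + 2)‖
        ≤ ‖q‖ ^ (n.natAbs : ℤ) / (1 - ‖q‖ ^ 2) := by
          apply div_le_div₀ (zpow_nonneg hr0.le _) hnum (by linarith) hd
      _ = (1 - ‖q‖ ^ 2)⁻¹ * ‖q‖ ^ n.natAbs := by
          rw [div_eq_mul_inv, mul_comm, zpow_natCast]
      _ ≤ Cq q * ‖q‖ ^ n.natAbs := by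
          rw [Cq]
          apply mul_le_mul_of_nonneg_right _ (by positivity)
          linarith
  · -- n < 0, so n ≤ -1
    have hd1 : ‖q‖ ^ ((-3) : ℤ) ≤ ‖q‖ ^ ((5 : ℤ) * n + 2) := hanti (by omega)
    have hd : ‖q‖ ^ (-3 : ℤ) - 1 ≤ ‖1 - q ^ (5 * n + 2)‖ := by
      calc ‖q‖ ^ (-3 : ℤ) - 1 ≤ ‖q ^ (5 * n + 2)‖ - ‖(1 : ℂ)‖ := by
            rw [norm_zpow, norm_one]
            linarith [hd1]
        _ ≤ ‖q ^ (5 * n + 2) - 1‖ := norm_sub_norm_le _ _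
        _ = ‖1 - q ^ (5 * n + 2)‖ := by rw [norm_sub_rev]
    have hnum : ‖q‖ ^ ((5 * n ^ 2 + 5 * n) / 2) ≤ ‖q‖ ^ ((n.natAbs : ℤ) - 1) := by
      apply hanti
      have h1 : (n.natAbs : ℤ) = -n := by omega
      rw [h1]
      have h2 : (0 : ℤ) ≤ (5 * n + 2) * (n + 1) := by
        have ha : 5 * n + 2 ≤ 0 := by omega
        have hb : n + 1 ≤ 0 := by omega
        nlinarith [mul_nonneg (neg_nonneg.2 ha) (neg_nonneg.2 hb)]
      nlinarith [hu]
    calc ‖q‖ ^ ((5 * n ^ 2 + 5 * n) / 2) / ‖1 - q ^ (5 * n + 2)‖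
        ≤ ‖q‖ ^ ((n.natAbs : ℤ) - 1) / (‖q‖ ^ (-3 : ℤ) - 1) := by
          apply div_le_div₀ (zpow_nonneg hr0.le _) hnum (by linarith) hd
      _ = (‖q‖⁻¹ * (‖q‖ ^ (-3 : ℤ) - 1)⁻¹) * ‖q‖ ^ n.natAbs := by
          rw [div_eq_mul_inv, zpow_sub₀ (ne_of_gt hr0), zpow_natCast, zpow_one]
          field_simp
      _ ≤ Cq q * ‖q‖ ^ n.natAbs := by
          rw [Cq]
          apply mul_le_mul_of_nonneg_right _ (by positivity)
          linarith

lemma summable_geom_int {q : ℂ} (hq0 : q ≠ 0) (hq : ‖q‖ < 1) (c : ℝ) :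
    Summable (fun n : ℤ => c * ‖q‖ ^ n.natAbs) := by
  apply Summable.of_nat_of_neg
  · simpa using (summable_geometric_of_lt_one (norm_nonneg q) hq).mul_left c
  · simpa using (summable_geometric_of_lt_one (norm_nonneg q) hq).mul_left c

lemma trm_summable {q : ℂ} (hq0 : q ≠ 0) (hq : ‖q‖ < 1) :
    Summable (fun n : ℤ => trm q n) := by
  apply Summable.of_norm
  apply Summable.of_nonneg_of_le (fun n => norm_nonneg _) (norm_trm_le hq0 hq)
  exact summable_geom_int hq0 hq (Cq q)

end BilateralAux
end Part8
section Part9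
open Finset Filter Topology
namespace BilateralAux

noncomputable def F (q : ℂ) (N : ℕ) (n : ℤ) : ℂ :=
  if n.natAbs ≤ N then
    trm q n * (P q N ^ 2 / (P q ((N : ℤ) + n).toNat * P q ((N : ℤ) - n).toNat))
  else 0

lemma tendsto_toNat_add (n : ℤ) : Tendsto (fun N : ℕ => ((N : ℤ) + n).toNat) atTop atTop := by
  apply tendsto_atTop_atTop.mpr
  intro b
  exact ⟨b + n.natAbs, fun a ha => by omega⟩

lemma F_tendsto {q : ℂ} (hq0 : q ≠ 0) (hq : ‖q‖ < 1) (n : ℤ) :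
    Tendsto (fun N => F q N n) atTop (𝓝 (trm q n)) := by
  have hL := tendsto_P (q := q) hq
  have hLne : qPochInf (q ^ 5) (q ^ 5) ≠ 0 :=
    poch_ne_zero (norm_pow_lt_one hq (by norm_num)) (norm_pow_lt_one hq (by norm_num))
  have ha : Tendsto (fun N : ℕ => P q (((N : ℤ) + n).toNat)) atTop
      (𝓝 (qPochInf (q ^ 5) (q ^ 5))) := hL.comp (tendsto_toNat_add n)
  have hb : Tendsto (fun N : ℕ => P q (((N : ℤ) - n).toNat)) atTop
      (𝓝 (qPochInf (q ^ 5) (q ^ 5))) := by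
    have := hL.comp (tendsto_toNat_add (-n))
    apply this.congr
    intro N
    simp [sub_eq_add_neg]
  have hc : Tendsto (fun N : ℕ =>
      P q N ^ 2 / (P q (((N : ℤ) + n).toNat) * P q (((N : ℤ) - n).toNat))) atTop
      (𝓝 (qPochInf (q ^ 5) (q ^ 5) ^ 2 /
        (qPochInf (q ^ 5) (q ^ 5) * qPochInf (q ^ 5) (q ^ 5)))) :=
    (hL.pow 2).div (ha.mul hb) (mul_ne_zero hLne hLne)
  have hone : qPochInf (q ^ 5) (q ^ 5) ^ 2 /
      (qPochInf (q ^ 5) (q ^ 5) * qPochInf (q ^ 5) (q ^ 5)) = 1 := by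
    rw [pow_two]
    exact div_self (mul_ne_zero hLne hLne)
  have hd : Tendsto (fun N : ℕ => trm q n *
      (P q N ^ 2 / (P q (((N : ℤ) + n).toNat) * P q (((N : ℤ) - n).toNat)))) atTop
      (𝓝 (trm q n)) := by
    have := tendsto_const_nhds (x := trm q n) (f := atTop (α := ℕ)) |>.mul hc
    rwa [hone, mul_one] at this
  apply hd.congr'
  filter_upwards [eventually_ge_atTop n.natAbs] with N hN
  rw [F, if_pos hN]

noncomputable def Kq (q : ℂ) : ℝ :=
  Real.exp (‖q‖ ^ 5 * (1 - ‖q‖ ^ 5)⁻¹) ^ 2 /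
    (Real.exp (-((1 - ‖q‖ ^ 5)⁻¹ * (‖q‖ ^ 5 * (1 - ‖q‖ ^ 5)⁻¹))) *
      Real.exp (-((1 - ‖q‖ ^ 5)⁻¹ * (‖q‖ ^ 5 * (1 - ‖q‖ ^ 5)⁻¹))))

lemma Cq_nonneg {q : ℂ} (hq0 : q ≠ 0) (hq : ‖q‖ < 1) : 0 ≤ Cq q := by
  obtain ⟨hr0, hr2, hr3⟩ := r_facts hq0 hq
  have h1 : 0 ≤ (1 - ‖q‖ ^ 2)⁻¹ := inv_nonneg.2 (by linarith)
  have h2 : 0 ≤ ‖q‖⁻¹ * (‖q‖ ^ (-3 : ℤ) - 1)⁻¹ :=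
    mul_nonneg (inv_nonneg.2 hr0.le) (inv_nonneg.2 (by linarith))
  rw [Cq]
  linarith

lemma F_bound {q : ℂ} (hq0 : q ≠ 0) (hq : ‖q‖ < 1) (N : ℕ) (n : ℤ) :
    ‖F q N n‖ ≤ (Cq q * Kq q) * ‖q‖ ^ n.natAbs := by
  have hK : 0 ≤ Kq q := by rw [Kq]; positivity
  rw [F]
  split_ifs with hcase
  · rw [norm_mul]
    have h1 : ‖trm q n‖ ≤ Cq q * ‖q‖ ^ n.natAbs := norm_trm_le hq0 hq n
    have h2 : ‖P q N ^ 2 / (P q ((N : ℤ) + n).toNat * P q ((N : ℤ) - n).toNat)‖ ≤ Kq q := by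
      rw [norm_div, norm_pow, norm_mul, Kq]
      apply div_le_div₀ (by positivity)
      · exact pow_le_pow_left₀ (norm_nonneg _) (P_norm_upper hq N) 2
      · positivity
      · exact mul_le_mul (P_norm_lower hq _) (P_norm_lower hq _) (Real.exp_pos _).le
          (norm_nonneg _)
    calc ‖trm q n‖ * ‖P q N ^ 2 / (P q ((N : ℤ) + n).toNat * P q ((N : ℤ) - n).toNat)‖
        ≤ (Cq q * ‖q‖ ^ n.natAbs) * Kq q :=
          mul_le_mul h1 h2 (norm_nonneg _) (mul_nonneg (Cq_nonneg hq0 hq) (by positivity))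
      _ = (Cq q * Kq q) * ‖q‖ ^ n.natAbs := by ring
  · rw [norm_zero]
    have := Cq_nonneg hq0 hq
    positivity

lemma F_sum {q : ℂ} (hq0 : q ≠ 0) (hq : ‖q‖ < 1) (N : ℕ) :
    ∑' n : ℤ, F q N n = P q N ^ 2 / (A q N * B q N) := by
  have hsupp : ∀ n ∉ Finset.Icc (-(N : ℤ)) (N : ℤ), F q N n = 0 := by
    intro n hn
    rw [Finset.mem_Icc] at hn
    rw [F, if_neg (by omega)]
  rw [tsum_eq_sum hsupp, ← finite_id hq0 hq N]
  apply Finset.sum_nbij' (i := fun n : ℤ => (n + (N : ℤ)).toNat)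
    (j := fun i : ℕ => (i : ℤ) - (N : ℤ))
  · intro n hn
    rw [Finset.mem_Icc] at hn
    rw [mem_range]
    omega
  · intro i hi
    rw [mem_range] at hi
    rw [Finset.mem_Icc]
    omega
  · intro n hn
    rw [Finset.mem_Icc] at hn
    omega
  · intro i hi
    rw [mem_range] at hi
    omega
  · intro n hn
    rw [Finset.mem_Icc] at hn
    rw [F, if_pos (by omega)]
    have e1 : ((n + (N : ℤ)).toNat : ℤ) - (N : ℤ) = n := by omega
    have e2 : ((N : ℤ) + n).toNat = (n + (N : ℤ)).toNat := by omega
    have e3 : 2 * N - (n + (N : ℤ)).toNat = ((N : ℤ) - n).toNat := by omega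
    rw [e1, e2, e3]

theorem tsum_trm {q : ℂ} (hq0 : q ≠ 0) (hq : ‖q‖ < 1) :
    ∑' n : ℤ, trm q n = qPochInf (q ^ 5) (q ^ 5) ^ 2 /
      (qPochInf (q ^ 2) (q ^ 5) * qPochInf (q ^ 3) (q ^ 5)) := by
  have h1 : Tendsto (fun N => ∑' n : ℤ, F q N n) atTop (𝓝 (∑' n : ℤ, trm q n)) :=
    tendsto_tsum_of_dominated_convergence (summable_geom_int hq0 hq (Cq q * Kq q))
      (F_tendsto hq0 hq) (Eventually.of_forall (fun N n => F_bound hq0 hq N n))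
  have hABne : qPochInf (q ^ 2) (q ^ 5) * qPochInf (q ^ 3) (q ^ 5) ≠ 0 :=
    mul_ne_zero
      (poch_ne_zero (norm_pow_lt_one hq (by norm_num)) (norm_pow_lt_one hq (by norm_num)))
      (poch_ne_zero (norm_pow_lt_one hq (by norm_num)) (norm_pow_lt_one hq (by norm_num)))
  have h2 : Tendsto (fun N => ∑' n : ℤ, F q N n) atTop
      (𝓝 (qPochInf (q ^ 5) (q ^ 5) ^ 2 /
        (qPochInf (q ^ 2) (q ^ 5) * qPochInf (q ^ 3) (q ^ 5)))) := by
    have h3 := ((tendsto_P (q := q) hq).pow 2).div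
      ((tendsto_A (q := q) hq).mul (tendsto_B (q := q) hq)) hABne
    exact h3.congr fun N => (F_sum hq0 hq N).symm
  exact tendsto_nhds_unique h1 h2

end BilateralAux
end Part9

theorem bilateral_sum_H (q : ℂ) (hq0 : q ≠ 0) (hq : ‖q‖ < 1) :
    (∑' m : ℤ, (-1 : ℂ) ^ m * q ^ ((5 * m ^ 2 + 5 * m) / 2) / (1 - q ^ (5 * m + 2)))
      = qPochInf (q ^ 5) (q ^ 5) ^ 2 * RRH q := by
  have h := BilateralAux.tsum_trm hq0 hq
  simp only [BilateralAux.trm] at h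
  rw [h, RRH, mul_one_div]
end

section
/- The two series identities are equivalent: (B): (1/q²) Σ_{j≥0} [ q^{5j+2}/(1−q^{5j+1}) − q^{5j+5}/(1−q^{5j+4}) − 3q^{5j+3}/(1−q^{5j+2}) + 3q^{5j+4}/(1−q^{5j+3}) ] = (q^5;q^5)_∞² H(q)³/G(q)², and (C): Σ_{m≥0} q^m(1−q^{m+1})³/(1−q^{5m+5}) = (q^5;q^5)_∞² H(q)³/G(q)². More precisely, the left sides of (B) and (C) are equal as formal power series. -/
/-- Auxiliary double-sum kernel. -/
def FF (q : ℂ) : ℕ → ℕ → ℂ := fun j k =>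
  q ^ (5*j+2+(5*j+1)*k) - q ^ (5*j+5+(5*j+4)*k)
    - 3 * q ^ (5*j+3+(5*j+2)*k) + 3 * q ^ (5*j+4+(5*j+3)*k)

lemma norm_pow_lt_one {q : ℂ} (hq : ‖q‖ < 1) {b : ℕ} (hb : b ≠ 0) : ‖q ^ b‖ < 1 := by
  rw [norm_pow]
  exact pow_lt_one₀ (norm_nonneg q) hq hb

lemma one_sub_pow_ne {q : ℂ} (hq : ‖q‖ < 1) {b : ℕ} (hb : b ≠ 0) : 1 - q ^ b ≠ 0 := by
  intro h
  have h1 : q ^ b = 1 := by linear_combination -h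
  have h2 := congrArg norm h1
  rw [norm_one] at h2
  have := norm_pow_lt_one hq hb
  rw [h2] at this
  exact lt_irrefl 1 this

lemma summable_geom {q : ℂ} (hq : ‖q‖ < 1) (a b : ℕ) (hb : b ≠ 0) :
    Summable (fun k : ℕ => q ^ (a + b * k)) := by
  have h1 : ‖q ^ b‖ < 1 := norm_pow_lt_one hq hb
  have : (fun k : ℕ => q ^ (a + b * k)) = fun k => q ^ a * (q ^ b) ^ k := by
    funext k; rw [pow_add, pow_mul]
  rw [this]
  exact (summable_geometric_of_norm_lt_one h1).mul_left _

lemma geom_tsum {q : ℂ} (hq : ‖q‖ < 1) (a b : ℕ) (hb : b ≠ 0) :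
    ∑' k : ℕ, q ^ (a + b * k) = q ^ a / (1 - q ^ b) := by
  have h1 : ‖q ^ b‖ < 1 := norm_pow_lt_one hq hb
  simp only [pow_add, pow_mul]
  rw [tsum_mul_left, tsum_geometric_of_norm_lt_one h1, div_eq_mul_inv]

/-- The Lambert-series reduction (B) ⇔ (C): the left sides of the two
identities agree as (convergent) series for `0 < |q| < 1`. -/
theorem lambert_B_eq_C (q : ℂ) (hq0 : q ≠ 0) (hq : ‖q‖ < 1) :
    (1 / q ^ 2) * ∑' j : ℕ,
        (q ^ (5 * j + 2) / (1 - q ^ (5 * j + 1)) - q ^ (5 * j + 5) / (1 - q ^ (5 * j + 4))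
          - 3 * q ^ (5 * j + 3) / (1 - q ^ (5 * j + 2))
          + 3 * q ^ (5 * j + 4) / (1 - q ^ (5 * j + 3)))
      = ∑' m : ℕ, q ^ m * (1 - q ^ (m + 1)) ^ 3 / (1 - q ^ (5 * m + 5)) := by
  have hr0 : (0:ℝ) ≤ ‖q‖ := norm_nonneg q
  -- Summability of the uncurried kernel
  have hbound : ∀ p : ℕ × ℕ, ‖Function.uncurry (FF q) p‖ ≤ 8 * (‖q‖ ^ p.1 * ‖q‖ ^ p.2) := by
    rintro ⟨j, k⟩
    have hp : ∀ e : ℕ, j + k ≤ e → ‖q ^ e‖ ≤ ‖q‖ ^ j * ‖q‖ ^ k := by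
      intro e he
      rw [norm_pow, ← pow_add]
      exact pow_le_pow_of_le_one hr0 hq.le he
    have h1 := hp (5*j+2+(5*j+1)*k) (by nlinarith)
    have h2 := hp (5*j+5+(5*j+4)*k) (by nlinarith)
    have h3 := hp (5*j+3+(5*j+2)*k) (by nlinarith)
    have h4 := hp (5*j+4+(5*j+3)*k) (by nlinarith)
    have n3 : ‖(3:ℂ)‖ = 3 := by norm_num
    simp only [Function.uncurry, FF]
    calc ‖q ^ (5*j+2+(5*j+1)*k) - q ^ (5*j+5+(5*j+4)*k)
            - 3 * q ^ (5*j+3+(5*j+2)*k) + 3 * q ^ (5*j+4+(5*j+3)*k)‖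
        ≤ ‖q ^ (5*j+2+(5*j+1)*k) - q ^ (5*j+5+(5*j+4)*k)
            - 3 * q ^ (5*j+3+(5*j+2)*k)‖ + ‖(3:ℂ) * q ^ (5*j+4+(5*j+3)*k)‖ :=
          norm_add_le _ _
      _ ≤ (‖q ^ (5*j+2+(5*j+1)*k) - q ^ (5*j+5+(5*j+4)*k)‖
            + ‖(3:ℂ) * q ^ (5*j+3+(5*j+2)*k)‖) + ‖(3:ℂ) * q ^ (5*j+4+(5*j+3)*k)‖ :=
          add_le_add_left (norm_sub_le _ _) _
      _ ≤ ((‖q ^ (5*j+2+(5*j+1)*k)‖ + ‖q ^ (5*j+5+(5*j+4)*k)‖)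
            + ‖(3:ℂ) * q ^ (5*j+3+(5*j+2)*k)‖) + ‖(3:ℂ) * q ^ (5*j+4+(5*j+3)*k)‖ := by
          gcongr
          exact norm_sub_le _ _
      _ ≤ 8 * (‖q‖ ^ j * ‖q‖ ^ k) := by
          rw [norm_mul, norm_mul, n3]
          nlinarith [norm_nonneg (q ^ (5*j+2+(5*j+1)*k))]
  have hgeo : Summable (fun n : ℕ => ‖q‖ ^ n) := summable_geometric_of_lt_one hr0 hq
  have hprod : Summable (fun p : ℕ × ℕ => ‖q‖ ^ p.1 * ‖q‖ ^ p.2) :=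
    hgeo.mul_of_nonneg hgeo (fun n => pow_nonneg hr0 n) (fun n => pow_nonneg hr0 n)
  have hF : Summable (Function.uncurry (FF q)) :=
    Summable.of_norm_bounded (hprod.mul_left 8) hbound
  -- Each Lambert term is the inner sum of the kernel
  have hterm : ∀ j : ℕ,
      (q ^ (5 * j + 2) / (1 - q ^ (5 * j + 1)) - q ^ (5 * j + 5) / (1 - q ^ (5 * j + 4))
          - 3 * q ^ (5 * j + 3) / (1 - q ^ (5 * j + 2))
          + 3 * q ^ (5 * j + 4) / (1 - q ^ (5 * j + 3))) = ∑' k : ℕ, FF q j k := by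
    intro j
    have sA := summable_geom hq (5*j+2) (5*j+1) (by omega)
    have sB := summable_geom hq (5*j+5) (5*j+4) (by omega)
    have sC := summable_geom hq (5*j+3) (5*j+2) (by omega)
    have sD := summable_geom hq (5*j+4) (5*j+3) (by omega)
    unfold FF
    rw [Summable.tsum_add ((sA.sub sB).sub (sC.mul_left 3)) (sD.mul_left 3),
      Summable.tsum_sub (sA.sub sB) (sC.mul_left 3), Summable.tsum_sub sA sB,
      tsum_mul_left, tsum_mul_left,
      geom_tsum hq (5*j+2) (5*j+1) (by omega), geom_tsum hq (5*j+5) (5*j+4) (by omega),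
      geom_tsum hq (5*j+3) (5*j+2) (by omega), geom_tsum hq (5*j+4) (5*j+3) (by omega)]
    ring
  have hrow : ∀ j : ℕ, Summable (fun k => FF q j k) := by
    intro j
    unfold FF
    exact (((summable_geom hq (5*j+2) (5*j+1) (by omega)).sub
      (summable_geom hq (5*j+5) (5*j+4) (by omega))).sub
      ((summable_geom hq (5*j+3) (5*j+2) (by omega)).mul_left 3)).add
      ((summable_geom hq (5*j+4) (5*j+3) (by omega)).mul_left 3)
  have hcol : ∀ k : ℕ, Summable (fun j => FF q j k) := by
    intro k
    have e1 : ∀ j : ℕ, 5*j+2+(5*j+1)*k = (k+2) + (5*(k+1))*j := by intro j; ring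
    have e2 : ∀ j : ℕ, 5*j+5+(5*j+4)*k = (4*k+5) + (5*(k+1))*j := by intro j; ring
    have e3 : ∀ j : ℕ, 5*j+3+(5*j+2)*k = (2*k+3) + (5*(k+1))*j := by intro j; ring
    have e4 : ∀ j : ℕ, 5*j+4+(5*j+3)*k = (3*k+4) + (5*(k+1))*j := by intro j; ring
    unfold FF
    simp only [e1, e2, e3, e4]
    exact (((summable_geom hq (k+2) (5*(k+1)) (by omega)).sub
      (summable_geom hq (4*k+5) (5*(k+1)) (by omega))).sub
      ((summable_geom hq (2*k+3) (5*(k+1)) (by omega)).mul_left 3)).add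
      ((summable_geom hq (3*k+4) (5*(k+1)) (by omega)).mul_left 3)
  rw [tsum_congr hterm, ← Summable.tsum_comm' hF hrow hcol, ← tsum_mul_left]
  apply tsum_congr
  intro k
  -- Evaluate the inner sum over j for fixed k
  have e1 : ∀ j : ℕ, 5*j+2+(5*j+1)*k = (k+2) + (5*(k+1))*j := by intro j; ring
  have e2 : ∀ j : ℕ, 5*j+5+(5*j+4)*k = (4*k+5) + (5*(k+1))*j := by intro j; ring
  have e3 : ∀ j : ℕ, 5*j+3+(5*j+2)*k = (2*k+3) + (5*(k+1))*j := by intro j; ring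
  have e4 : ∀ j : ℕ, 5*j+4+(5*j+3)*k = (3*k+4) + (5*(k+1))*j := by intro j; ring
  have sA := summable_geom hq (k+2) (5*(k+1)) (by omega)
  have sB := summable_geom hq (4*k+5) (5*(k+1)) (by omega)
  have sC := summable_geom hq (2*k+3) (5*(k+1)) (by omega)
  have sD := summable_geom hq (3*k+4) (5*(k+1)) (by omega)
  have hinner : ∑' j : ℕ, FF q j k
      = q ^ (k+2) / (1 - q ^ (5*(k+1))) - q ^ (4*k+5) / (1 - q ^ (5*(k+1)))
        - 3 * (q ^ (2*k+3) / (1 - q ^ (5*(k+1)))) + 3 * (q ^ (3*k+4) / (1 - q ^ (5*(k+1)))) := by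
    unfold FF
    simp only [e1, e2, e3, e4]
    rw [Summable.tsum_add ((sA.sub sB).sub (sC.mul_left 3)) (sD.mul_left 3),
      Summable.tsum_sub (sA.sub sB) (sC.mul_left 3), Summable.tsum_sub sA sB,
      tsum_mul_left, tsum_mul_left,
      geom_tsum hq (k+2) (5*(k+1)) (by omega), geom_tsum hq (4*k+5) (5*(k+1)) (by omega),
      geom_tsum hq (2*k+3) (5*(k+1)) (by omega), geom_tsum hq (3*k+4) (5*(k+1)) (by omega)]
  rw [hinner]
  have h5 : 5*(k+1) = 5*k+5 := by ring
  rw [h5]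
  have hne : 1 - q ^ (5*k+5) ≠ 0 := one_sub_pow_ne hq (by omega)
  field_simp
  ring
end
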